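/- Let Q₈ denote the quaternion group of order eight and let G = (Circle × Q₈) ⧸ N, where N is the central subgroup of order two generated by (−1, −1). Then the commutator map c : G × G → G, c(x,y) = x⁻¹y⁻¹xy, is null-homotopic (so G is homotopy abelian), but G is not commutative. -/

import Mathlib

/-- The commutator map `c : G × G → G`, `c(x, y) = x⁻¹y⁻¹xy`, as a continuous map. -/
def commutatorMap (G : Type*) [Group G] [TopologicalSpace G] [IsTopologicalGroup G] :
    C(G × G, G) :=
  ⟨fun p => p.1⁻¹ * p.2⁻¹ * p.1 * p.2, by continuity⟩

/-- The quaternion group of order eight carries the discrete topology. -/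
instance : TopologicalSpace (QuaternionGroup 2) := ⊥

instance : DiscreteTopology (QuaternionGroup 2) := ⟨rfl⟩

instance : IsTopologicalGroup (QuaternionGroup 2) where
  continuous_mul := continuous_of_discreteTopology
  continuous_inv := continuous_of_discreteTopology

/-- The element `-1` of the circle group. -/
noncomputable def Circle.negOne : Circle :=
  ⟨-1, by
    show (-1 : ℂ) ∈ Metric.sphere (0 : ℂ) 1
    simp⟩

/-- The central subgroup of order two of `Circle × Q₈` generated by `(-1, -1)`, where
`-1 = a²` in `Q₈ = QuaternionGroup 2`. -/
noncomputable def centralTwo : Subgroup (Circle × QuaternionGroup 2) :=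
  Subgroup.zpowers (Circle.negOne, QuaternionGroup.a 2)

instance : centralTwo.Normal := by
  constructor
  intro x hx g
  obtain ⟨k, rfl⟩ := Subgroup.mem_zpowers_iff.mp hx
  have ha : ∀ q : QuaternionGroup 2, q * QuaternionGroup.a 2 = QuaternionGroup.a 2 * q := by
    decide
  have hz : Commute g (Circle.negOne, QuaternionGroup.a 2) :=
    Prod.ext (mul_comm _ _) (ha g.2)
  have h : Commute g ((Circle.negOne, QuaternionGroup.a 2) ^ k) := hz.zpow_right k
  rw [h.eq, mul_assoc, mul_inv_cancel, mul_one]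
  exact Subgroup.mem_zpowers_iff.mpr ⟨k, rfl⟩

/-- The quotient group `G = (Circle × Q₈) ⧸ ⟨(-1, -1)⟩`, a compact topological group. -/
noncomputable abbrev QG : Type :=
  (Circle × QuaternionGroup 2) ⧸ centralTwo

open QuaternionGroup


lemma aux_sq_zpow {G : Type*} [Group G] {x : G} (h : x * x = 1) (k : ℤ) :
    x ^ k = 1 ∨ x ^ k = x := by
  have h2 : x ^ (2:ℤ) = 1 := by rw [show (2:ℤ) = 1 + 1 from rfl, zpow_add, zpow_one, h]
  rcases Int.even_or_odd k with ⟨m, rfl⟩ | ⟨m, rfl⟩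
  · left; rw [← two_mul, zpow_mul, h2, one_zpow]
  · right; rw [zpow_add, zpow_mul, h2, one_zpow, one_mul, zpow_one]

lemma negOne_mul_negOne : (Circle.negOne * Circle.negOne : Circle) = 1 :=
  Subtype.ext (by show ((-1 : ℂ)) * (-1) = 1; norm_num)

lemma mem_centralTwo_iff {g : Circle × QuaternionGroup 2} :
    g ∈ centralTwo ↔ g = 1 ∨ g = (Circle.negOne, QuaternionGroup.a 2) := by
  constructor
  · intro hg
    obtain ⟨k, rfl⟩ := Subgroup.mem_zpowers_iff.mp hg
    exact aux_sq_zpow (Prod.ext negOne_mul_negOne (by decide)) k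
  · rintro (rfl | rfl)
    exacts [one_mem _, Subgroup.mem_zpowers _]

abbrev Z8 : Subgroup (QuaternionGroup 2) := Subgroup.zpowers (QuaternionGroup.a 2)

instance : Z8.Normal := by
  constructor
  intro n hn g
  obtain ⟨k, rfl⟩ := Subgroup.mem_zpowers_iff.mp hn
  have ha : ∀ q : QuaternionGroup 2, q * a 2 = a 2 * q := by decide
  have h : Commute g ((a 2 : QuaternionGroup 2) ^ k) := Commute.zpow_right (ha g) k
  rw [h.eq, mul_assoc, mul_inv_cancel, mul_one]
  exact Subgroup.mem_zpowers_iff.mpr ⟨k, rfl⟩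

abbrev D8 : Type := QuaternionGroup 2 ⧸ Z8

instance : DiscreteTopology D8 :=
  (discreteTopology_iff_isOpen_singleton.mpr fun _ =>
    isQuotientMap_quotient_mk'.isOpen_preimage.mp (isOpen_discrete _))

lemma mem_Z8_iff {q : QuaternionGroup 2} : q ∈ Z8 ↔ q = 1 ∨ q = a 2 := by
  constructor
  · intro hq
    obtain ⟨k, rfl⟩ := Subgroup.mem_zpowers_iff.mp hq
    exact aux_sq_zpow (by decide) k
  · rintro (rfl | rfl)
    exacts [one_mem _, Subgroup.mem_zpowers _]

/-- projection `QG → D8`. -/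
noncomputable def piQ : QG →* D8 :=
  QuotientGroup.lift centralTwo
    ((QuotientGroup.mk' Z8).comp (MonoidHom.snd Circle (QuaternionGroup 2)))
    (by
      intro g hg
      rcases mem_centralTwo_iff.mp hg with rfl | rfl
      · simp
      · simp only [MonoidHom.mem_ker, MonoidHom.comp_apply, MonoidHom.coe_snd,
          QuotientGroup.mk'_apply]
        exact (QuotientGroup.eq_one_iff _).mpr (Subgroup.mem_zpowers _))

lemma piQ_continuous : Continuous piQ :=
  continuous_quot_lift _ (QuotientGroup.continuous_mk.comp continuous_snd)

/-- commutator sign on `Q₈`. -/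
def kap (q₁ q₂ : QuaternionGroup 2) : ℝ :=
  if q₁⁻¹ * q₂⁻¹ * q₁ * q₂ = 1 then 0 else 1

lemma kap_compat : ∀ (a₁ b₁ a₂ b₂ : QuaternionGroup 2),
    a₁⁻¹ * a₂ ∈ Z8 → b₁⁻¹ * b₂ ∈ Z8 → kap a₁ b₁ = kap a₂ b₂ := by
  intro a₁ b₁ a₂ b₂ h1 h2
  have e1 : a₂ = a₁ * (a₁⁻¹ * a₂) := by group
  have e2 : b₂ = b₁ * (b₁⁻¹ * b₂) := by group
  have key : ∀ x y z w : QuaternionGroup 2, z ∈ ({1, a 2} : Set (QuaternionGroup 2)) →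
      w ∈ ({1, a 2} : Set (QuaternionGroup 2)) →
      (x*z)⁻¹ * (y*w)⁻¹ * (x*z) * (y*w) = x⁻¹ * y⁻¹ * x * y := by decide
  rcases mem_Z8_iff.mp h1 with h1' | h1' <;> rcases mem_Z8_iff.mp h2 with h2' | h2' <;>
    unfold kap <;> rw [e1, e2, h1', h2'] <;>
    rw [key _ _ _ _ (by simp) (by simp)]

noncomputable def wD : D8 → D8 → ℝ :=
  Quotient.lift₂ kap fun a₁ b₁ a₂ b₂ h1 h2 =>
    kap_compat a₁ b₁ a₂ b₂ (QuotientGroup.leftRel_apply.mp h1) (QuotientGroup.leftRel_apply.mp h2)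

/-- inclusion of the circle into `QG`. -/
noncomputable def iota (z : Circle) : QG := QuotientGroup.mk (z, 1)

lemma iota_continuous : Continuous iota :=
  QuotientGroup.continuous_mk.comp (continuous_id.prodMk continuous_const)

lemma exp_pi_eq : Circle.exp Real.pi = Circle.negOne :=
  Subtype.ext (by
    rw [Circle.coe_exp]
    show Complex.exp (↑Real.pi * Complex.I) = -1
    exact Complex.exp_pi_mul_I)

lemma key_formula (p : QG × QG) :
    commutatorMap QG p = iota (Circle.exp (Real.pi * wD (piQ p.1) (piQ p.2))) := by
  obtain ⟨x, y⟩ := p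
  induction x using QuotientGroup.induction_on with
  | H g₁ =>
  induction y using QuotientGroup.induction_on with
  | H g₂ =>
  have hπ : ∀ g : Circle × QuaternionGroup 2, piQ (QuotientGroup.mk g) = QuotientGroup.mk g.2 :=
    fun g => rfl
  have hw : wD (QuotientGroup.mk g₁.2) (QuotientGroup.mk g₂.2) = kap g₁.2 g₂.2 := rfl
  have hLHS : commutatorMap QG (QuotientGroup.mk g₁, QuotientGroup.mk g₂) =
      QuotientGroup.mk (g₁⁻¹ * g₂⁻¹ * g₁ * g₂) := rfl
  rw [hLHS, hπ, hπ, hw]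
  have hfst : (g₁⁻¹ * g₂⁻¹ * g₁ * g₂).1 = 1 := by
    show g₁.1⁻¹ * g₂.1⁻¹ * g₁.1 * g₂.1 = 1
    rw [mul_comm g₁.1⁻¹ g₂.1⁻¹]; simp [mul_assoc]
  have hcase' : ∀ q₁ q₂ : QuaternionGroup 2, q₁⁻¹ * q₂⁻¹ * q₁ * q₂ = 1 ∨
      q₁⁻¹ * q₂⁻¹ * q₁ * q₂ = a 2 := by decide
  have hcase := hcase' g₁.2 g₂.2
  have hsnd : (g₁⁻¹ * g₂⁻¹ * g₁ * g₂).2 = g₁.2⁻¹ * g₂.2⁻¹ * g₁.2 * g₂.2 := rfl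
  rcases hcase with h | h
  · have he : g₁⁻¹ * g₂⁻¹ * g₁ * g₂ = 1 := Prod.ext hfst (hsnd.trans h)
    rw [he]
    unfold kap
    rw [if_pos h, mul_zero, Circle.exp_zero]
    rfl
  · have he : g₁⁻¹ * g₂⁻¹ * g₁ * g₂ = ((1 : Circle), a 2) := Prod.ext hfst (hsnd.trans h)
    rw [he]
    unfold kap
    rw [if_neg (by rw [h]; decide), mul_one, exp_pi_eq]
    show _ = QuotientGroup.mk (Circle.negOne, (1 : QuaternionGroup 2))
    rw [QuotientGroup.eq]
    apply mem_centralTwo_iff.mpr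
    right
    refine Prod.ext ?_ (by decide)
    show (1 : Circle)⁻¹ * Circle.negOne = Circle.negOne
    simp

/-- Remark 3.8 (`rem:homotopyabeliandoesnotimplycontractible`): the group
`G = (Circle × Q₈) ⧸ ⟨(-1, -1)⟩` is homotopy abelian (its commutator map is
null-homotopic) but not commutative. -/
theorem quotient_circle_quaternion_homotopy_abelian_not_commutative :
    (commutatorMap QG).Nullhomotopic ∧ ¬ ∀ x y : QG, x * y = y * x := by
  constructor
  · refine ⟨1, ⟨?_⟩⟩
    have hφ : Continuous fun p : QG × QG => wD (piQ p.1) (piQ p.2) :=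
      (continuous_of_discreteTopology (f := fun d : D8 × D8 => wD d.1 d.2)).comp
        ((piQ_continuous.comp continuous_fst).prodMk (piQ_continuous.comp continuous_snd))
    refine
      { toFun := fun q => iota (Circle.exp (Real.pi * (1 - (q.1 : ℝ)) * wD (piQ q.2.1) (piQ q.2.2)))
        continuous_toFun := ?_
        map_zero_left := ?_
        map_one_left := ?_ }
    · exact iota_continuous.comp (Circle.exp.continuous.comp
        ((continuous_const.mul (continuous_const.sub
          (continuous_subtype_val.comp continuous_fst))).mul (hφ.comp continuous_snd)))
    · intro p
      simp only [Set.Icc.coe_zero, sub_zero, mul_one]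
      exact (key_formula p).symm
    · intro p
      simp only [Set.Icc.coe_one, sub_self, mul_zero, zero_mul, Circle.exp_zero]
      rfl
  · intro h
    have := h (QuotientGroup.mk ((1 : Circle), a 1)) (QuotientGroup.mk ((1 : Circle), xa 0))
    rw [← QuotientGroup.mk_mul, ← QuotientGroup.mk_mul, QuotientGroup.eq] at this
    rcases mem_centralTwo_iff.mp this with h' | h'
    · have h2 := congrArg Prod.snd h'
      revert h2; decide
    · have h1 : (((1 : Circle) * 1)⁻¹ * ((1 : Circle) * 1) : Circle) = Circle.negOne :=
        congrArg Prod.fst h'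
      simp at h1
      have h2 : ((1 : Circle) : ℂ) = -1 := by rw [h1]; rfl
      norm_num at h2
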